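/- (Ephraim–Gray reduction) The MMSE regret reg_k = inf over k-ary quantizers q on R^n of E||η(X) - E[η(X)|q(X)]||^2 equals inf over codebooks C ⊂ R^p, |C| = k, of E||η(X) - q_C(η(X))||^2, where η(X) = E[Y|X]. -/

import Mathlib

open MeasureTheory
open scoped ENNReal

set_option maxHeartbeats 1000000

theorem factor_real {Ω β : Type*} [mβ : MeasurableSpace β] (X : Ω → β)
    {f : Ω → ℝ} (hf : Measurable[mβ.comap X] f) :
    ∃ g : β → ℝ, Measurable g ∧ ∀ ω, f ω = g (X ω) := by
  set h : Ω → ℝ := fun ω => Real.arctan (f ω) with hh_def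
  have hh : Measurable[mβ.comap X] h := Real.continuous_arctan.measurable.comp hf
  have hA : ∀ q : ℚ, ∃ A : Set β, MeasurableSet A ∧ X ⁻¹' A = {ω | (q : ℝ) < h ω} := fun q =>
    MeasurableSpace.measurableSet_comap.mp (hh measurableSet_Ioi)
  choose A hAm hApre using hA
  classical
  set F : ℚ → β → ℝ := fun q x => if x ∈ A q then min (q : ℝ) 2 else -2 with hF
  set g₀ : β → ℝ := fun x => ⨆ q : ℚ, F q x with hg₀
  have hg₀m : Measurable g₀ :=
    Measurable.iSup fun q => Measurable.ite (hAm q) measurable_const measurable_const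
  have hbdd : ∀ x, BddAbove (Set.range fun q : ℚ => F q x) := by
    intro x
    refine ⟨2, ?_⟩
    rintro y ⟨q, rfl⟩
    simp only [hF]
    split_ifs
    · exact min_le_right _ _
    · norm_num
  have key : ∀ ω, g₀ (X ω) = h ω := by
    intro ω
    have hmem : ∀ q : ℚ, X ω ∈ A q ↔ (q : ℝ) < h ω := fun q =>
      ⟨fun hq => by have : ω ∈ X ⁻¹' A q := hq; rwa [hApre q] at this,
       fun hq => show ω ∈ X ⁻¹' A q by rw [hApre q]; exact hq⟩
    have hpi := Real.pi_lt_d2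
    have hlt2 : h ω < 2 := lt_of_lt_of_le (Real.arctan_lt_pi_div_two _) (by linarith)
    have hgt2 : -2 < h ω := lt_of_le_of_lt (by linarith) (Real.neg_pi_div_two_lt_arctan _)
    apply le_antisymm
    · apply ciSup_le
      intro q
      simp only [hF]
      split_ifs with hq
      · exact le_trans (min_le_left _ _) ((hmem q).mp hq).le
      · linarith
    · refine le_of_forall_lt fun c hc => ?_
      obtain ⟨q, hq1, hq2⟩ := exists_rat_btwn hc
      have hterm : F q (X ω) = (q : ℝ) := by
        simp only [hF, if_pos ((hmem q).mpr hq2)]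
        exact min_eq_left (by linarith)
      calc c < (q : ℝ) := hq1
        _ = F q (X ω) := hterm.symm
        _ ≤ g₀ (X ω) := le_ciSup (hbdd (X ω)) q
  refine ⟨fun x => Real.tan (g₀ x), ?_, fun ω => ?_⟩
  · have htan : Measurable Real.tan := by
      have : Real.tan = fun x => Real.sin x / Real.cos x := funext fun x => Real.tan_eq_sin_div_cos x
      rw [this]
      exact Real.continuous_sin.measurable.div Real.continuous_cos.measurable
    exact htan.comp hg₀m
  · show f ω = Real.tan (g₀ (X ω))
    rw [key ω]
    simp [hh_def, Real.tan_arctan]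

theorem factor_vec {Ω β : Type*} [mβ : MeasurableSpace β] {p : ℕ} (X : Ω → β)
    {f : Ω → EuclideanSpace ℝ (Fin p)} (hf : Measurable[mβ.comap X] f) :
    ∃ g : β → EuclideanSpace ℝ (Fin p), Measurable g ∧ ∀ ω, f ω = g (X ω) := by
  have hcoord : ∀ i : Fin p, Measurable[mβ.comap X] fun ω => f ω i := fun i =>
    (measurable_pi_apply i).comp (Measurable.comp (WithLp.measurable_ofLp 2 (Fin p → ℝ)) hf)
  choose g hg hfg using fun i => factor_real X (hcoord i)
  refine ⟨fun x => WithLp.toLp 2 (fun i => g i x : Fin p → ℝ), ?_, fun ω => ?_⟩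
  · exact (WithLp.measurable_toLp 2 (Fin p → ℝ)).comp (measurable_pi_lambda _ fun i => hg i)
  · ext i
    exact hfg i ω

theorem condexp_eq_L2 {α : Type*} {m m0 : MeasurableSpace α} {μ : Measure α} {p : ℕ}
    (hm : m ≤ m0) [IsFiniteMeasure μ]
    {f : α → EuclideanSpace ℝ (Fin p)} (hf : MemLp f 2 μ) :
    ((condExpL2 (EuclideanSpace ℝ (Fin p)) ℝ hm (hf.toLp f) : α →₂[μ] EuclideanSpace ℝ (Fin p))
      : α → EuclideanSpace ℝ (Fin p)) =ᵐ[μ] μ[f|m] := by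
  refine ae_eq_condExp_of_forall_setIntegral_eq hm (hf.integrable one_le_two)
    (fun s _ hμs => integrableOn_condExpL2_of_measure_ne_top hm hμs.ne _)
    (fun s hs hμs => ?_) (aestronglyMeasurable_condExpL2 hm _)
  rw [integral_condExpL2_eq hm (hf.toLp f) hs hμs.ne]
  exact setIntegral_congr_ae (hm s hs) ((hf.coeFn_toLp.mono fun x hx _ => hx))

theorem memℒp_condexp_two {α : Type*} {m m0 : MeasurableSpace α} {μ : Measure α} {p : ℕ}
    (hm : m ≤ m0) [IsFiniteMeasure μ]
    {f : α → EuclideanSpace ℝ (Fin p)} (hf : MemLp f 2 μ) :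
    MemLp (μ[f|m]) 2 μ :=
  (Lp.memLp ((condExpL2 (EuclideanSpace ℝ (Fin p)) ℝ hm (hf.toLp f)
    : α →₂[μ] EuclideanSpace ℝ (Fin p)))).ae_eq (condexp_eq_L2 hm hf)

theorem norm_sq_L2 {α : Type*} {m0 : MeasurableSpace α} {μ : Measure α} {p : ℕ}
    (h : α →₂[μ] EuclideanSpace ℝ (Fin p)) :
    ‖h‖ ^ 2 = ∫ a, ‖h a‖ ^ 2 ∂μ := by
  rw [← real_inner_self_eq_norm_sq, MeasureTheory.L2.inner_def]
  exact integral_congr_ae (Filter.Eventually.of_forall fun a => real_inner_self_eq_norm_sq _)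

theorem condexp_minimal {α : Type*} {m m0 : MeasurableSpace α} {μ : Measure α} {p : ℕ}
    (hm : m ≤ m0) [IsFiniteMeasure μ]
    {f g : α → EuclideanSpace ℝ (Fin p)} (hf : MemLp f 2 μ) (hg : MemLp g 2 μ)
    (hgm : AEStronglyMeasurable[m] g μ) :
    ∫ ω, ‖f ω - (μ[f|m]) ω‖ ^ 2 ∂μ ≤ ∫ ω, ‖f ω - g ω‖ ^ 2 ∂μ := by
  set F := hf.toLp f with hF
  set G := hg.toLp g with hG
  set P := (condExpL2 (EuclideanSpace ℝ (Fin p)) ℝ hm F : α →₂[μ] EuclideanSpace ℝ (Fin p)) with hP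
  have hPGm : AEStronglyMeasurable[m] (⇑(P - G)) μ := by
    refine AEStronglyMeasurable.congr ?_ (Lp.coeFn_sub P G).symm
    exact AEStronglyMeasurable.sub (aestronglyMeasurable_condExpL2 hm F)
      (hgm.congr hg.coeFn_toLp.symm)
  have h0 : (inner ℝ (F - P) (P - G) : ℝ) = 0 := by
    have h1 := inner_condExpL2_eq_inner_fun (𝕜 := ℝ) hm F (P - G) hPGm
    have h1' : (inner ℝ P (P - G) : ℝ) = inner ℝ F (P - G) := h1
    rw [inner_sub_left, h1', sub_self]
  have hnorm : ‖F - P‖ ^ 2 ≤ ‖F - G‖ ^ 2 := by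
    have hdecomp : F - G = (F - P) + (P - G) := by abel
    rw [hdecomp, @norm_add_sq_real]
    rw [h0]
    have := sq_nonneg ‖P - G‖
    have := norm_nonneg (P - G)
    nlinarith [sq_nonneg ‖F - P‖]
  have hFP : ∫ ω, ‖f ω - (μ[f|m]) ω‖ ^ 2 ∂μ = ‖F - P‖ ^ 2 := by
    rw [norm_sq_L2 (F - P)]
    refine integral_congr_ae ?_
    filter_upwards [hf.coeFn_toLp, condexp_eq_L2 hm hf, Lp.coeFn_sub F P] with ω h1 h2 h3
    rw [h3]
    show ‖f ω - (μ[f|m]) ω‖ ^ 2 = ‖F ω - P ω‖ ^ 2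
    rw [h1, h2]
  have hFG : ∫ ω, ‖f ω - g ω‖ ^ 2 ∂μ = ‖F - G‖ ^ 2 := by
    rw [norm_sq_L2 (F - G)]
    refine integral_congr_ae ?_
    filter_upwards [hf.coeFn_toLp, hg.coeFn_toLp, Lp.coeFn_sub F G] with ω h1 h2 h3
    rw [h3]
    show ‖f ω - g ω‖ ^ 2 = ‖F ω - G ω‖ ^ 2
    rw [h1, h2]
  rw [hFP, hFG]
  exact hnorm

theorem exists_nearest {p k : ℕ} (hk : 0 < k) (e : Fin k → EuclideanSpace ℝ (Fin p)) :
    ∃ N : EuclideanSpace ℝ (Fin p) → Fin k, Measurable N ∧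
      ∀ y j, ‖y - e (N y)‖ ≤ ‖y - e j‖ := by
  classical
  set P : Fin k → EuclideanSpace ℝ (Fin p) → Prop := fun i y => ∀ j, ‖y - e i‖ ≤ ‖y - e j‖
    with hPdef
  have hPmeas : ∀ i, MeasurableSet {y | P i y} := by
    intro i
    have : {y | P i y} = ⋂ j, {y | ‖y - e i‖ ≤ ‖y - e j‖} := by
      ext y; simp [hPdef, Set.mem_iInter]
    rw [this]
    refine MeasurableSet.iInter fun j => measurableSet_le ?_ ?_
    · exact ((continuous_id.sub continuous_const).norm).measurable
    · exact ((continuous_id.sub continuous_const).norm).measurable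
  have hne : ∀ y, (Finset.univ.filter fun i => P i y).Nonempty := by
    intro y
    obtain ⟨i, _, hi⟩ := Finset.exists_min_image Finset.univ (fun i => ‖y - e i‖)
      ⟨⟨0, hk⟩, Finset.mem_univ _⟩
    exact ⟨i, Finset.mem_filter.mpr ⟨Finset.mem_univ _, fun j => hi j (Finset.mem_univ j)⟩⟩
  set N : EuclideanSpace ℝ (Fin p) → Fin k := fun y => (Finset.univ.filter fun i => P i y).min' (hne y)
    with hNdef
  have hNP : ∀ y, P (N y) y := fun y =>
    (Finset.mem_filter.mp (Finset.min'_mem _ (hne y))).2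
  refine ⟨N, ?_, fun y j => hNP y j⟩
  apply measurable_to_countable'
  intro i
  have hset : N ⁻¹' {i} = {y | P i y} ∩ ⋂ j, {y | j < i → ¬ P j y} := by
    ext y
    simp only [Set.mem_preimage, Set.mem_singleton_iff, Set.mem_inter_iff, Set.mem_iInter,
      Set.mem_setOf_eq]
    constructor
    · rintro rfl
      refine ⟨hNP y, fun j hj hPj => ?_⟩
      have hmem : j ∈ Finset.univ.filter (fun i => P i y) :=
        Finset.mem_filter.mpr ⟨Finset.mem_univ _, hPj⟩
      have : N y ≤ j := Finset.min'_le _ j hmem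
      exact absurd hj (not_lt.mpr this)
    · rintro ⟨hPi, hmin⟩
      have hmem : i ∈ Finset.univ.filter (fun i => P i y) :=
        Finset.mem_filter.mpr ⟨Finset.mem_univ _, hPi⟩
      have hile : N y ≤ i := Finset.min'_le _ i hmem
      rcases lt_or_eq_of_le hile with hlt | heq
      · exact absurd (hNP y) (hmin _ hlt)
      · exact heq
  rw [hset]
  refine (hPmeas i).inter (MeasurableSet.iInter fun j => ?_)
  by_cases hj : j < i
  · have : {y | j < i → ¬ P j y} = {y | P j y}ᶜ := by ext y; simp [hj]
    rw [this]; exact (hPmeas j).compl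
  · have : {y | j < i → ¬ P j y} = Set.univ := by ext y; simp [hj]
    rw [this]; exact MeasurableSet.univ

theorem integrable_sq_norm {α : Type*} {m0 : MeasurableSpace α} {μ : Measure α} {p : ℕ}
    {f : α → EuclideanSpace ℝ (Fin p)} (hf : MemLp f 2 μ) :
    Integrable (fun ω => ‖f ω‖ ^ 2) μ := by
  have := hf.integrable_norm_rpow two_ne_zero ENNReal.ofNat_ne_top
  have h2 : (2 : ℝ≥0∞).toReal = (2 : ℝ) := by simp
  rw [h2] at this
  refine this.congr (Filter.Eventually.of_forall fun ω => ?_)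
  show (‖f ω‖ : ℝ) ^ (2:ℝ) = ‖f ω‖ ^ (2:ℕ)
  rw [show ((2:ℝ)) = ((2:ℕ) : ℝ) by norm_num, Real.rpow_natCast]

/-- Ephraim–Gray reduction: the MMSE regret, i.e. the infimum over k-ary
quantizers of `X` of `E‖η(X) - E[η(X)|q(X)]‖²` where `η(X) = E[Y|X]`, equals the
minimum expected squared distance from `η(X)` to the nearest point of a
size-`k` codebook in `ℝ^p`. -/
theorem stmt4 {Ω : Type*} [MeasurableSpace Ω] (μ : Measure Ω) [IsProbabilityMeasure μ]
    {n p k : ℕ} (hk : 0 < k)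
    (X : Ω → EuclideanSpace ℝ (Fin n)) (Y : Ω → EuclideanSpace ℝ (Fin p))
    (hX : Measurable X) (hY : Measurable Y) (hY2 : MemLp Y 2 μ)
    (η : Ω → EuclideanSpace ℝ (Fin p))
    (hη : η = μ[Y | MeasurableSpace.comap X inferInstance]) :
    (⨅ q : {q : EuclideanSpace ℝ (Fin n) → Fin k // Measurable q},
      ∫ ω, ‖η ω - (μ[η | MeasurableSpace.comap (fun ω => q.1 (X ω)) inferInstance]) ω‖ ^ 2 ∂μ)
    = ⨅ C : {C : Finset (EuclideanSpace ℝ (Fin p)) // C.card = k},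
        ∫ ω, ⨅ c : C.1, ‖η ω - (c : EuclideanSpace ℝ (Fin p))‖ ^ 2 ∂μ := by
  classical
  have hη2 : MemLp η 2 μ := by
    rw [hη]; exact memℒp_condexp_two hX.comap_le hY2
  have hηsm : StronglyMeasurable[MeasurableSpace.comap X inferInstance] η := by
    rw [hη]; exact stronglyMeasurable_condExp
  have hηmeas : Measurable η := fun s hs => hX.comap_le _ (hηsm.measurable hs)
  haveI hqne : Nonempty {q : EuclideanSpace ℝ (Fin n) → Fin k // Measurable q} :=
    ⟨⟨fun _ => ⟨0, hk⟩, measurable_const⟩⟩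
  rcases Nat.eq_zero_or_pos p with hp | hp
  · -- degenerate case p = 0
    subst hp
    have hE0 : ∀ a b : EuclideanSpace ℝ (Fin 0), a = b := fun a b => by ext i; exact i.elim0
    have hL : (⨅ q : {q : EuclideanSpace ℝ (Fin n) → Fin k // Measurable q},
        ∫ ω, ‖η ω - (μ[η | MeasurableSpace.comap (fun ω => q.1 (X ω)) inferInstance]) ω‖ ^ 2 ∂μ)
        = 0 := by
      have h0 : ∀ q : {q : EuclideanSpace ℝ (Fin n) → Fin k // Measurable q},
          ∫ ω, ‖η ω - (μ[η | MeasurableSpace.comap (fun ω => q.1 (X ω)) inferInstance]) ω‖ ^ 2 ∂μ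
            = 0 := by
        intro q
        have : (fun ω => ‖η ω - (μ[η | MeasurableSpace.comap (fun ω => q.1 (X ω)) inferInstance]) ω‖ ^ 2)
            = fun _ => (0:ℝ) := funext fun ω => by
          rw [hE0 (η ω) ((μ[η | MeasurableSpace.comap (fun ω => q.1 (X ω)) inferInstance]) ω),
            sub_self, norm_zero]
          norm_num
        rw [this, integral_zero]
      rw [iInf_congr h0]
      exact ciInf_const
    rw [hL]
    rcases isEmpty_or_nonempty {C : Finset (EuclideanSpace ℝ (Fin 0)) // C.card = k} with hE | hNE
    · exact (Real.iInf_of_isEmpty _).symm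
    · have h0 : ∀ C : {C : Finset (EuclideanSpace ℝ (Fin 0)) // C.card = k},
          ∫ ω, ⨅ c : C.1, ‖η ω - (c : EuclideanSpace ℝ (Fin 0))‖ ^ 2 ∂μ = 0 := by
        intro C
        haveI : Nonempty {x // x ∈ C.1} :=
          Finset.nonempty_coe_sort.mpr (Finset.card_pos.mp (by rw [C.2]; exact hk))
        have : (fun ω => ⨅ c : C.1, ‖η ω - (c : EuclideanSpace ℝ (Fin 0))‖ ^ 2)
            = fun _ => (0:ℝ) := funext fun ω => by
          have hzz : ∀ c : C.1, ‖η ω - (c : EuclideanSpace ℝ (Fin 0))‖ ^ 2 = (0:ℝ) := fun c => by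
            rw [hE0 (η ω) (c : EuclideanSpace ℝ (Fin 0)), sub_self, norm_zero]
            norm_num
          rw [iInf_congr hzz]
          exact ciInf_const
        rw [this, integral_zero]
      rw [iInf_congr h0]
      exact (ciInf_const).symm
  · -- main case p > 0
    haveI : Infinite (EuclideanSpace ℝ (Fin p)) :=
      Infinite.of_injective (fun r : ℝ => EuclideanSpace.single ⟨0, hp⟩ r)
        (fun a b hab => by simpa using congrArg (fun v : EuclideanSpace ℝ (Fin p) => v ⟨0, hp⟩) hab)
    haveI : Nonempty {C : Finset (EuclideanSpace ℝ (Fin p)) // C.card = k} := by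
      obtain ⟨C, _, hC⟩ := Infinite.exists_superset_card_eq (∅ : Finset (EuclideanSpace ℝ (Fin p))) k
        (by simp)
      exact ⟨⟨C, hC⟩⟩
    apply le_antisymm
    · -- LHS ≤ RHS
      refine le_ciInf fun C => ?_
      obtain ⟨C, hC⟩ := C
      subst hC
      set e : Fin C.card → EuclideanSpace ℝ (Fin p) := fun i => (C.equivFin.symm i : _) with he
      have hemem : ∀ i, e i ∈ C := fun i => (C.equivFin.symm i).2
      have hesurj : ∀ c ∈ C, ∃ i, e i = c := fun c hc =>
        ⟨C.equivFin ⟨c, hc⟩, by simp [he]⟩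
      have hkC : 0 < C.card := hk
      obtain ⟨N, hNm, hNP⟩ := exists_nearest hkC e
      obtain ⟨g, hgm, hηg⟩ := factor_vec X hηsm.measurable
      set q : EuclideanSpace ℝ (Fin n) → Fin C.card := fun x => N (g x) with hq
      have hqm : Measurable q := hNm.comp hgm
      have hqX : ∀ ω, q (X ω) = N (η ω) := fun ω => by
        show N (g (X ω)) = N (η ω); rw [hηg ω]
      set f₀ : Ω → EuclideanSpace ℝ (Fin p) := fun ω => e (N (η ω)) with hf₀
      have hqXm : Measurable (fun ω => q (X ω)) := hqm.comp hX
      have hmqle : MeasurableSpace.comap (fun ω => q (X ω)) inferInstance ≤ ‹MeasurableSpace Ω› :=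
        hqXm.comap_le
      have hf₀meas : Measurable[MeasurableSpace.comap (fun ω => q (X ω)) inferInstance] f₀ := by
        have h1 : Measurable[MeasurableSpace.comap (fun ω => q (X ω)) inferInstance]
            (fun ω => q (X ω)) := Measurable.of_comap_le le_rfl
        have h2 : Measurable (fun i : Fin C.card => e i) := measurable_from_top
        have heq : f₀ = (fun i : Fin C.card => e i) ∘ (fun ω => q (X ω)) := funext fun ω => by
          show e (N (η ω)) = e (q (X ω))
          rw [hqX ω]
        rw [heq]; exact h2.comp h1
      have hf₀sm : AEStronglyMeasurable[
          (MeasurableSpace.comap (fun ω => q (X ω)) inferInstance)] f₀ μ :=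
        hf₀meas.stronglyMeasurable.aestronglyMeasurable
      haveI hCne : Nonempty {x // x ∈ C} :=
        Finset.nonempty_coe_sort.mpr (Finset.card_pos.mp hkC)
      have hf₀2 : MemLp f₀ 2 μ := by
        refine MemLp.of_bound ?_ (∑ i, ‖e i‖) ?_
        · have hm0 : Measurable ((fun i : Fin C.card => e i) ∘ (N ∘ η)) :=
            measurable_from_top.comp (hNm.comp hηmeas)
          exact (hm0.aestronglyMeasurable : AEStronglyMeasurable f₀ μ)
        · exact Filter.Eventually.of_forall fun ω =>
            Finset.single_le_sum (f := fun i => ‖e i‖) (fun i _ => norm_nonneg _)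
              (Finset.mem_univ _)
      have hmin := condexp_minimal hmqle hη2 hf₀2 hf₀sm
      have hpt : (fun ω => ‖η ω - f₀ ω‖ ^ 2)
          = fun ω => ⨅ c : C, ‖η ω - (c : EuclideanSpace ℝ (Fin p))‖ ^ 2 := by
        funext ω
        refine le_antisymm (le_ciInf fun c => ?_)
          (ciInf_le ⟨0, ?_⟩ (⟨f₀ ω, hemem _⟩ : {x // x ∈ C}))
        · obtain ⟨j, hj⟩ := hesurj (c : EuclideanSpace ℝ (Fin p)) c.2
          rw [← hj]
          exact pow_le_pow_left₀ (norm_nonneg _) (hNP (η ω) j) 2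
        · rintro x ⟨c, rfl⟩; exact sq_nonneg _
      refine le_trans (ciInf_le ⟨0, ?_⟩
        (⟨q, hqm⟩ : {q : EuclideanSpace ℝ (Fin n) → Fin C.card // Measurable q})) ?_
      · rintro x ⟨q', rfl⟩; exact integral_nonneg fun ω => sq_nonneg _
      · calc ∫ ω, ‖η ω - (μ[η|MeasurableSpace.comap (fun ω => q (X ω)) inferInstance]) ω‖ ^ 2 ∂μ
            ≤ ∫ ω, ‖η ω - f₀ ω‖ ^ 2 ∂μ := hmin
          _ = ∫ ω, ⨅ c : C, ‖η ω - (c : EuclideanSpace ℝ (Fin p))‖ ^ 2 ∂μ := by rw [hpt]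
    · -- RHS ≤ LHS
      refine le_ciInf fun q => ?_
      have hqXm : Measurable (fun ω => q.1 (X ω)) := q.2.comp hX
      have hmqle : MeasurableSpace.comap (fun ω => q.1 (X ω)) inferInstance ≤ ‹MeasurableSpace Ω› :=
        hqXm.comap_le
      set Ec := μ[η|MeasurableSpace.comap (fun ω => q.1 (X ω)) inferInstance] with hEc
      have hEc2 : MemLp Ec 2 μ := memℒp_condexp_two hmqle hη2
      have hEcsm : Measurable[MeasurableSpace.comap (fun ω => q.1 (X ω)) inferInstance] Ec :=
        stronglyMeasurable_condExp.measurable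
      obtain ⟨h, hhm, hEch⟩ := factor_vec (fun ω => q.1 (X ω)) hEcsm
      set C₀ := Finset.image h Finset.univ with hC₀def
      have hC₀ : C₀.card ≤ k := le_trans Finset.card_image_le (by simp)
      obtain ⟨C, hsub, hcard⟩ := Infinite.exists_superset_card_eq C₀ k hC₀
      have key : ∀ ω, (⨅ c : C, ‖η ω - (c : EuclideanSpace ℝ (Fin p))‖ ^ 2)
          ≤ ‖η ω - Ec ω‖ ^ 2 := by
        intro ω
        have hmem : Ec ω ∈ C := hsub (by
          rw [hEch ω]
          exact Finset.mem_image_of_mem h (Finset.mem_univ _))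
        exact ciInf_le ⟨0, by rintro x ⟨c, rfl⟩; exact sq_nonneg _⟩
          (⟨Ec ω, hmem⟩ : {x // x ∈ C})
      have hint : Integrable (fun ω => ‖η ω - Ec ω‖ ^ 2) μ := by
        have := integrable_sq_norm (hη2.sub hEc2)
        exact this.congr (Filter.Eventually.of_forall fun ω => by simp)
      refine le_trans (ciInf_le ⟨0, ?_⟩
        (⟨C, hcard⟩ : {C : Finset (EuclideanSpace ℝ (Fin p)) // C.card = k})) ?_
      · rintro x ⟨C', rfl⟩
        exact integral_nonneg fun ω => Real.iInf_nonneg fun c => sq_nonneg _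
      · exact integral_mono_of_nonneg
          (Filter.Eventually.of_forall fun ω => Real.iInf_nonneg fun c => sq_nonneg _)
          hint (Filter.Eventually.of_forall key)
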